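/- Let a, b, c, t be real numbers with 0 < c < b, a < b and b < t². Then ∫_{√b}^{t} ((s² − b)^{−1/2} − (s² − a)^{−1/2}) (s² − c)^{−1/2} ds ≤ (1/(2√b)) · ln(1 + (b−a)/(b−c) + 2 sqrt((b−a)/(b−c))). -/

import Mathlib

open MeasureTheory Set


noncomputable def Gaux (a b c s : ℝ) : ℝ :=
  1 / Real.sqrt b * (Real.log (Real.sqrt (s ^ 2 - b) + Real.sqrt (s ^ 2 - c)) -
    Real.log (Real.sqrt (s ^ 2 - a) + Real.sqrt (s ^ 2 - c)))

noncomputable def Gaux' (a b c s : ℝ) : ℝ :=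
  1 / Real.sqrt b * (s * ((Real.sqrt (s ^ 2 - b))⁻¹ * (Real.sqrt (s ^ 2 - c))⁻¹) -
    s * ((Real.sqrt (s ^ 2 - a))⁻¹ * (Real.sqrt (s ^ 2 - c))⁻¹))

lemma log_sqrt_add_hasDeriv (p q s : ℝ) (hp : p < s ^ 2) (hq : q < s ^ 2) :
    HasDerivAt (fun x : ℝ => Real.log (Real.sqrt (x ^ 2 - p) + Real.sqrt (x ^ 2 - q)))
      (s * ((Real.sqrt (s ^ 2 - p))⁻¹ * (Real.sqrt (s ^ 2 - q))⁻¹)) s := by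
  have hBpos : 0 < Real.sqrt (s ^ 2 - p) := Real.sqrt_pos.2 (by linarith)
  have hCpos : 0 < Real.sqrt (s ^ 2 - q) := Real.sqrt_pos.2 (by linarith)
  have h1 : HasDerivAt (fun x : ℝ => x ^ 2 - p) (2 * s) s := by
    simpa using (hasDerivAt_pow 2 s).sub_const p
  have h2 : HasDerivAt (fun x : ℝ => x ^ 2 - q) (2 * s) s := by
    simpa using (hasDerivAt_pow 2 s).sub_const q
  have hB : HasDerivAt (fun x : ℝ => Real.sqrt (x ^ 2 - p))
      (1 / (2 * Real.sqrt (s ^ 2 - p)) * (2 * s)) s :=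
    (Real.hasDerivAt_sqrt (by linarith)).comp s h1
  have hC : HasDerivAt (fun x : ℝ => Real.sqrt (x ^ 2 - q))
      (1 / (2 * Real.sqrt (s ^ 2 - q)) * (2 * s)) s :=
    (Real.hasDerivAt_sqrt (by linarith)).comp s h2
  have hlog := (hB.add hC).log (by exact (add_pos hBpos hCpos).ne')
  convert hlog using 1
  · rfl
  rw [Pi.add_apply]
  field_simp
  ring

lemma Gaux_hasDeriv (a b c s : ℝ) (ha : a < s ^ 2) (hb : b < s ^ 2) (hc : c < s ^ 2) :
    HasDerivAt (Gaux a b c) (Gaux' a b c s) s := by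
  have h1 := log_sqrt_add_hasDeriv b c s hb hc
  have h2 := log_sqrt_add_hasDeriv a c s ha hc
  exact ((h1.sub h2).const_mul (1 / Real.sqrt b))

lemma Gaux'_nonneg (a b c s : ℝ) (hab : a < b) (hb : b < s ^ 2) (hs : 0 < s) :
    0 ≤ Gaux' a b c s := by
  have hA : Real.sqrt (s ^ 2 - b) ≤ Real.sqrt (s ^ 2 - a) := Real.sqrt_le_sqrt (by linarith)
  have hBpos : 0 < Real.sqrt (s ^ 2 - b) := Real.sqrt_pos.2 (by linarith)
  have hinv : (Real.sqrt (s ^ 2 - a))⁻¹ ≤ (Real.sqrt (s ^ 2 - b))⁻¹ :=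
    inv_anti₀ hBpos hA
  have hC : 0 ≤ (Real.sqrt (s ^ 2 - c))⁻¹ := by positivity
  have hsb : 0 ≤ 1 / Real.sqrt b := by positivity
  unfold Gaux'
  have : 0 ≤ s * ((Real.sqrt (s ^ 2 - b))⁻¹ * (Real.sqrt (s ^ 2 - c))⁻¹) -
      s * ((Real.sqrt (s ^ 2 - a))⁻¹ * (Real.sqrt (s ^ 2 - c))⁻¹) := by
    rw [← mul_sub, ← sub_mul]
    exact mul_nonneg hs.le (mul_nonneg (sub_nonneg.2 hinv) hC)
  exact mul_nonneg hsb this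

lemma key (a b c u t : ℝ) (hc : 0 < c) (hcb : c < b) (hab : a < b)
    (hu : Real.sqrt b < u) (hut : u < t) :
    (∫⁻ s in Ioo u t,
        ENNReal.ofReal (((Real.sqrt (s ^ 2 - b))⁻¹ - (Real.sqrt (s ^ 2 - a))⁻¹) *
          (Real.sqrt (s ^ 2 - c))⁻¹)) ≤
      ENNReal.ofReal (Gaux a b c t - Gaux a b c (Real.sqrt b)) := by
  have hb : 0 < b := hc.trans hcb
  have hsb : 0 < Real.sqrt b := Real.sqrt_pos.2 hb
  have hu0 : 0 < u := hsb.trans hu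
  have hsq : ∀ s : ℝ, u ≤ s → b < s ^ 2 := by
    intro s hs
    nlinarith [Real.sq_sqrt hb.le]
  -- pointwise bound
  have hpt : ∀ s ∈ Ioo u t,
      ENNReal.ofReal (((Real.sqrt (s ^ 2 - b))⁻¹ - (Real.sqrt (s ^ 2 - a))⁻¹) *
        (Real.sqrt (s ^ 2 - c))⁻¹) ≤ ENNReal.ofReal (Gaux' a b c s) := by
    intro s hs
    apply ENNReal.ofReal_le_ofReal
    have hbs := hsq s hs.1.le
    have hs0 : 0 < s := hu0.trans hs.1
    have hsbs : Real.sqrt b < s := hu.trans hs.1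
    have hBpos : 0 < Real.sqrt (s ^ 2 - b) := Real.sqrt_pos.2 (by linarith)
    have hApos : 0 < Real.sqrt (s ^ 2 - a) := Real.sqrt_pos.2 (by linarith)
    have hCpos : 0 < Real.sqrt (s ^ 2 - c) := Real.sqrt_pos.2 (by linarith)
    have hinv : (Real.sqrt (s ^ 2 - a))⁻¹ ≤ (Real.sqrt (s ^ 2 - b))⁻¹ :=
      inv_anti₀ hBpos (Real.sqrt_le_sqrt (by linarith))
    have hfac : (1:ℝ) ≤ s / Real.sqrt b := (one_le_div hsb).2 hsbs.le
    have hX : 0 ≤ ((Real.sqrt (s ^ 2 - b))⁻¹ - (Real.sqrt (s ^ 2 - a))⁻¹) *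
        (Real.sqrt (s ^ 2 - c))⁻¹ :=
      mul_nonneg (sub_nonneg.2 hinv) (by positivity)
    have heq : Gaux' a b c s = (s / Real.sqrt b) *
        (((Real.sqrt (s ^ 2 - b))⁻¹ - (Real.sqrt (s ^ 2 - a))⁻¹) *
          (Real.sqrt (s ^ 2 - c))⁻¹) := by
      unfold Gaux'; field_simp
    rw [heq]
    nlinarith [mul_le_mul_of_nonneg_right hfac hX]
  -- continuity of Gaux' on Icc u t
  have hcont : ContinuousOn (Gaux' a b c) (Icc u t) := by
    have hinvc : ∀ p : ℝ, p ≤ b →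
        ContinuousOn (fun s : ℝ => (Real.sqrt (s ^ 2 - p))⁻¹) (Icc u t) := by
      intro p hp
      apply ContinuousOn.inv₀
      · exact (Real.continuous_sqrt.comp ((continuous_pow 2).sub continuous_const)).continuousOn
      · intro x hx
        exact ne_of_gt (Real.sqrt_pos.2 (by have := hsq x hx.1; linarith))
    unfold Gaux'
    exact continuousOn_const.mul
      (((continuous_id.continuousOn).mul ((hinvc b le_rfl).mul (hinvc c hcb.le))).sub
        ((continuous_id.continuousOn).mul ((hinvc a hab.le).mul (hinvc c hcb.le))))
  have hInt : IntegrableOn (Gaux' a b c) (Ioo u t) :=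
    (hcont.integrableOn_Icc).mono_set Ioo_subset_Icc_self
  calc (∫⁻ s in Ioo u t,
        ENNReal.ofReal (((Real.sqrt (s ^ 2 - b))⁻¹ - (Real.sqrt (s ^ 2 - a))⁻¹) *
          (Real.sqrt (s ^ 2 - c))⁻¹))
      ≤ ∫⁻ s in Ioo u t, ENNReal.ofReal (Gaux' a b c s) := by
        apply setLIntegral_mono
        · have msq : ∀ p : ℝ, Measurable fun s : ℝ => (Real.sqrt (s ^ 2 - p))⁻¹ :=
            fun p => ((Real.continuous_sqrt.comp ((continuous_pow 2).sub continuous_const)).measurable).inv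
          apply ENNReal.measurable_ofReal.comp
          exact ((measurable_id.mul ((msq b).mul (msq c))).sub
            (measurable_id.mul ((msq a).mul (msq c)))).const_mul _
        · exact hpt
    _ = ENNReal.ofReal (∫ s in Ioo u t, Gaux' a b c s) := by
        rw [MeasureTheory.ofReal_integral_eq_lintegral_ofReal hInt]
        filter_upwards [ae_restrict_mem measurableSet_Ioo] with s hs
        exact Gaux'_nonneg a b c s hab (hsq s hs.1.le) (hu0.trans hs.1)
    _ = ENNReal.ofReal (Gaux a b c t - Gaux a b c u) := by
        congr 1
        rw [← MeasureTheory.integral_Ioc_eq_integral_Ioo,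
          ← intervalIntegral.integral_of_le hut.le]
        apply intervalIntegral.integral_eq_sub_of_hasDerivAt
        · intro x hx
          rw [uIcc_of_le hut.le] at hx
          have := hsq x hx.1
          exact Gaux_hasDeriv a b c x (by linarith) this (by linarith)
        · apply ContinuousOn.intervalIntegrable
          rwa [uIcc_of_le hut.le]
    _ ≤ ENNReal.ofReal (Gaux a b c t - Gaux a b c (Real.sqrt b)) := by
        apply ENNReal.ofReal_le_ofReal
        have hmono : MonotoneOn (Gaux a b c) (Icc (Real.sqrt b) t) := by
          apply monotoneOn_of_deriv_nonneg (convex_Icc _ _)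
          · -- continuity of Gaux on Icc √b t
            have hsq2 : ∀ s : ℝ, Real.sqrt b ≤ s → s ∈ Icc (Real.sqrt b) t → b ≤ s ^ 2 := by
              intro s hs _
              nlinarith [Real.sq_sqrt hb.le]
            unfold Gaux
            apply continuousOn_const.mul
            apply ContinuousOn.sub
            · apply ContinuousOn.log
              · exact ((Real.continuous_sqrt.comp ((continuous_pow 2).sub continuous_const)).add
                  (Real.continuous_sqrt.comp ((continuous_pow 2).sub continuous_const))).continuousOn
              · intro x hx
                have h1 : 0 < Real.sqrt (x ^ 2 - c) := Real.sqrt_pos.2 (by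
                  have := hsq2 x hx.1 hx; linarith)
                have h2 : 0 ≤ Real.sqrt (x ^ 2 - b) := Real.sqrt_nonneg _
                positivity
            · apply ContinuousOn.log
              · exact ((Real.continuous_sqrt.comp ((continuous_pow 2).sub continuous_const)).add
                  (Real.continuous_sqrt.comp ((continuous_pow 2).sub continuous_const))).continuousOn
              · intro x hx
                have h1 : 0 < Real.sqrt (x ^ 2 - c) := Real.sqrt_pos.2 (by
                  have := hsq2 x hx.1 hx; linarith)
                have h2 : 0 ≤ Real.sqrt (x ^ 2 - a) := Real.sqrt_nonneg _
                positivity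
          · rw [interior_Icc]
            intro x hx
            have hx2 : b < x ^ 2 := by nlinarith [Real.sq_sqrt hb.le, hx.1]
            exact (Gaux_hasDeriv a b c x (by linarith) hx2 (by linarith)).differentiableAt.differentiableWithinAt
          · rw [interior_Icc]
            intro x hx
            have hx2 : b < x ^ 2 := by nlinarith [Real.sq_sqrt hb.le, hx.1]
            rw [(Gaux_hasDeriv a b c x (by linarith) hx2 (by linarith)).deriv]
            exact Gaux'_nonneg a b c x hab hx2 (hsb.trans hx.1)
        have := hmono (left_mem_Icc.2 (by linarith)) (⟨hu.le, hut.le⟩ : u ∈ Icc _ _) hu.le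
        linarith

lemma Gbound (a b c t : ℝ) (hc : 0 < c) (hcb : c < b) (hab : a < b) (hbt : b < t ^ 2) :
    Gaux a b c t - Gaux a b c (Real.sqrt b) ≤
      1 / (2 * Real.sqrt b) *
        Real.log (1 + (b - a) / (b - c) + 2 * Real.sqrt ((b - a) / (b - c))) := by
  have hb : 0 < b := hc.trans hcb
  have hsb : 0 < Real.sqrt b := Real.sqrt_pos.2 hb
  have hba : 0 < b - a := by linarith
  have hbc : 0 < b - c := by linarith
  have hA : 0 < Real.sqrt (b - a) := Real.sqrt_pos.2 hba
  have hC : 0 < Real.sqrt (b - c) := Real.sqrt_pos.2 hbc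
  set r := Real.sqrt ((b - a) / (b - c)) with hr
  have hrval : r = Real.sqrt (b - a) / Real.sqrt (b - c) := Real.sqrt_div hba.le _
  have hr2 : r ^ 2 = (b - a) / (b - c) := Real.sq_sqrt (by positivity)
  have hRHS : 1 + (b - a) / (b - c) + 2 * r = (1 + r) ^ 2 := by rw [← hr2]; ring
  have hlogR : Real.log (1 + (b - a) / (b - c) + 2 * r) = 2 * Real.log (1 + r) := by
    rw [hRHS, Real.log_pow]; push_cast; ring
  have hsq : Real.sqrt b ^ 2 = b := Real.sq_sqrt hb.le
  have hGb : Gaux a b c (Real.sqrt b) = 1 / Real.sqrt b *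
      (Real.log (Real.sqrt (b - c)) - Real.log (Real.sqrt (b - a) + Real.sqrt (b - c))) := by
    unfold Gaux; rw [hsq]; simp
  have htc : 0 < t ^ 2 - c := by linarith
  have hGt : Gaux a b c t ≤ 0 := by
    unfold Gaux
    apply mul_nonpos_of_nonneg_of_nonpos (by positivity)
    have h1 : Real.sqrt (t ^ 2 - b) + Real.sqrt (t ^ 2 - c) ≤
        Real.sqrt (t ^ 2 - a) + Real.sqrt (t ^ 2 - c) := by
      have := Real.sqrt_le_sqrt (show t ^ 2 - b ≤ t ^ 2 - a by linarith); linarith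
    have hpos : 0 < Real.sqrt (t ^ 2 - b) + Real.sqrt (t ^ 2 - c) := by
      have h2 : 0 < Real.sqrt (t ^ 2 - c) := Real.sqrt_pos.2 htc
      have := Real.sqrt_nonneg (t ^ 2 - b); linarith
    have := Real.log_le_log hpos h1
    linarith
  have h1r : (1 : ℝ) + r = (Real.sqrt (b - a) + Real.sqrt (b - c)) / Real.sqrt (b - c) := by
    rw [hrval]; field_simp; ring
  have hlog1r : Real.log (1 + r) =
      Real.log (Real.sqrt (b - a) + Real.sqrt (b - c)) - Real.log (Real.sqrt (b - c)) := by
    rw [h1r, Real.log_div (by positivity) (by positivity)]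
  have heq : 1 / (2 * Real.sqrt b) * Real.log (1 + (b - a) / (b - c) + 2 * r) =
      1 / Real.sqrt b * (Real.log (Real.sqrt (b - a) + Real.sqrt (b - c)) -
        Real.log (Real.sqrt (b - c))) := by
    rw [hlogR, hlog1r]; field_simp
  rw [heq, hGb]
  ring_nf
  nlinarith [hGt]


/-- Let `a, b, c, t` be real numbers with `0 < c < b`, `a < b` and `b < t²`. Then
`∫_{√b}^{t} ((s² − b)^{−1/2} − (s² − a)^{−1/2}) (s² − c)^{−1/2} ds
  ≤ (1/(2√b)) ln(1 + (b−a)/(b−c) + 2 √((b−a)/(b−c)))`,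
the integral being a Lebesgue integral of a nonnegative function valued in `[0,∞]`. -/
theorem stmt_7 (a b c t : ℝ) (hc : 0 < c) (hcb : c < b) (hab : a < b) (hbt : b < t ^ 2) :
    (∫⁻ s in Ioo (Real.sqrt b) t,
        ENNReal.ofReal (((Real.sqrt (s ^ 2 - b))⁻¹ - (Real.sqrt (s ^ 2 - a))⁻¹) *
          (Real.sqrt (s ^ 2 - c))⁻¹)) ≤
      ENNReal.ofReal (1 / (2 * Real.sqrt b) *
        Real.log (1 + (b - a) / (b - c) + 2 * Real.sqrt ((b - a) / (b - c)))) := by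
  rcases le_or_gt t (Real.sqrt b) with h | h
  · rw [Ioo_eq_empty (not_lt.2 h), Measure.restrict_empty, lintegral_zero_measure]
    exact zero_le
  · have hb : 0 < b := hc.trans hcb
    have htb : 0 < t - Real.sqrt b := by linarith
    set u : ℕ → ℝ := fun n => Real.sqrt b + (t - Real.sqrt b) / (n + 2) with hu
    have hub : ∀ n, Real.sqrt b < u n := by
      intro n
      have h2 : 0 < (t - Real.sqrt b) / ((n : ℝ) + 2) := by positivity
      simp only [hu]; linarith
    have hut : ∀ n, u n < t := by
      intro n
      have h1 : (1 : ℝ) < (n : ℝ) + 2 := by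
        have := Nat.cast_nonneg (α := ℝ) n; linarith
      have h2 : (t - Real.sqrt b) / ((n : ℝ) + 2) < t - Real.sqrt b :=
        div_lt_self htb h1
      simp only [hu]; linarith
    have hUnion : Ioo (Real.sqrt b) t = ⋃ n, Ioo (u n) t := by
      ext s
      simp only [mem_iUnion, mem_Ioo]
      constructor
      · rintro ⟨h1, h2⟩
        obtain ⟨n, hn⟩ := exists_nat_gt ((t - Real.sqrt b) / (s - Real.sqrt b))
        refine ⟨n, ?_, h2⟩
        have hs0 : 0 < s - Real.sqrt b := by linarith
        have hn2 : (t - Real.sqrt b) / (s - Real.sqrt b) < (n : ℝ) + 2 := by linarith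
        have h3 : (t - Real.sqrt b) / ((n : ℝ) + 2) < s - Real.sqrt b := by
          rw [div_lt_iff₀ (by positivity)]
          have := (div_lt_iff₀ hs0).1 hn2
          nlinarith
        simp only [hu]; linarith
      · rintro ⟨n, h1, h2⟩
        exact ⟨(hub n).trans h1, h2⟩
    have hdir : Directed (· ⊆ ·) fun n : ℕ => Ioo (u n) t := by
      have hmono : Monotone fun n : ℕ => Ioo (u n) t := by
        intro m n hmn
        apply Ioo_subset_Ioo _ le_rfl
        have hcast : (m : ℝ) + 2 ≤ (n : ℝ) + 2 := by
          have : (m : ℝ) ≤ (n : ℝ) := Nat.cast_le.2 hmn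
          linarith
        have := div_le_div_of_nonneg_left htb.le (by positivity : (0:ℝ) < (m:ℝ) + 2) hcast
        simp only [hu]
        linarith
      exact hmono.directed_le
    rw [hUnion, setLIntegral_iUnion_of_directed _ hdir]
    apply iSup_le
    intro n
    calc (∫⁻ s in Ioo (u n) t,
          ENNReal.ofReal (((Real.sqrt (s ^ 2 - b))⁻¹ - (Real.sqrt (s ^ 2 - a))⁻¹) *
            (Real.sqrt (s ^ 2 - c))⁻¹))
        ≤ ENNReal.ofReal (Gaux a b c t - Gaux a b c (Real.sqrt b)) :=
          key a b c (u n) t hc hcb hab (hub n) (hut n)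
      _ ≤ _ := ENNReal.ofReal_le_ofReal (Gbound a b c t hc hcb hab hbt)
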